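/- Let n ≥ 3 and let H be a real symmetric positive definite n×n matrix with trace(H) = 1, and set K = I − H (so K is also symmetric positive definite). Then √(det H)/det(K) ≤ (√n/(n−1))ⁿ = n^{n/2}/(n−1)ⁿ, and equality holds if and only if H = (1/n)·I (in which case K = ((n−1)/n)·I). -/

import Mathlib

open Real Finset Matrix

-- 3-point weighted AM-GM at log level, non-strict
lemma log_amgm3_le {w₁ w₂ w₃ a₁ a₂ a₃ : ℝ} (hw₁ : 0 ≤ w₁) (hw₂ : 0 ≤ w₂) (hw₃ : 0 ≤ w₃)
    (hsum : w₁ + w₂ + w₃ = 1) (ha₁ : 0 < a₁) (ha₂ : 0 < a₂) (ha₃ : 0 < a₃) :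
    w₁ * Real.log a₁ + w₂ * Real.log a₂ + w₃ * Real.log a₃
      ≤ Real.log (w₁ * a₁ + w₂ * a₂ + w₃ * a₃) := by
  have h := (strictConcaveOn_log_Ioi.concaveOn).le_map_sum (t := (univ : Finset (Fin 3)))
    (w := ![w₁, w₂, w₃]) (p := ![a₁, a₂, a₃]) ?_ ?_ ?_
  · simpa [Fin.sum_univ_three, smul_eq_mul] using h
  · intro i _; fin_cases i <;> simpa
  · simp [Fin.sum_univ_three, hsum]
  · intro i _; fin_cases i <;> simpa

lemma log_amgm3_lt {w₁ w₂ w₃ a₁ a₂ a₃ : ℝ} (hw₁ : 0 < w₁) (hw₂ : 0 ≤ w₂) (hw₃ : 0 < w₃)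
    (hsum : w₁ + w₂ + w₃ = 1) (ha₁ : 0 < a₁) (ha₂ : 0 < a₂) (ha₃ : 0 < a₃) (hne : a₁ ≠ a₃) :
    w₁ * Real.log a₁ + w₂ * Real.log a₂ + w₃ * Real.log a₃
      < Real.log (w₁ * a₁ + w₂ * a₂ + w₃ * a₃) := by
  rcases eq_or_lt_of_le hw₂ with h2 | h2
  · have h := strictConcaveOn_log_Ioi.2 (Set.mem_Ioi.2 ha₁) (Set.mem_Ioi.2 ha₃) hne hw₁ hw₃
      (by linarith)
    subst h2
    simpa [smul_eq_mul] using h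
  · have h := strictConcaveOn_log_Ioi.lt_map_sum (t := (univ : Finset (Fin 3)))
      (w := ![w₁, w₂, w₃]) (p := ![a₁, a₂, a₃]) ?_ ?_ ?_ ?_
    · simpa [Fin.sum_univ_three, smul_eq_mul] using h
    · intro i _; fin_cases i <;> simpa
    · simp [Fin.sum_univ_three, hsum]
    · intro i _; fin_cases i <;> simpa
    · exact ⟨0, mem_univ _, 2, mem_univ _, by simpa using hne⟩

lemma key_identity {m t : ℝ} (hm : 3 ≤ m) (ht0 : 0 < t) (ht1 : t < 1) :
    (Real.log t - 2*Real.log (1-t))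
      + (m-1) * (Real.log ((1-t)/(m-1)) - 2*Real.log (1 - (1-t)/(m-1)))
      - (m * Real.log m - 2*m*Real.log (m-1))
    = (2*m-2) * ((1/(2*m-2)) * Real.log ((m-1)^2*t) + ((m-3)/(2*m-2)) * Real.log ((m-1)*(1-t))
        + (m/(2*m-2)) * Real.log ((m-1)^2/m) - Real.log (m-2+t)) := by
  have hm1 : (0:ℝ) < m - 1 := by linarith
  have hm0 : (0:ℝ) < m := by linarith
  have h1t : (0:ℝ) < 1 - t := by linarith
  have hmt : (0:ℝ) < m - 2 + t := by linarith
  have e1 : Real.log ((m-1)^2*t) = 2*Real.log (m-1) + Real.log t := by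
    rw [Real.log_mul (by positivity) ht0.ne', Real.log_pow]; push_cast; ring
  have e2 : Real.log ((m-1)*(1-t)) = Real.log (m-1) + Real.log (1-t) :=
    Real.log_mul hm1.ne' h1t.ne'
  have e3 : Real.log ((m-1)^2/m) = 2*Real.log (m-1) - Real.log m := by
    rw [Real.log_div (by positivity) hm0.ne', Real.log_pow]; push_cast; ring
  have e4 : Real.log ((1-t)/(m-1)) = Real.log (1-t) - Real.log (m-1) :=
    Real.log_div h1t.ne' hm1.ne'
  have e5 : 1 - (1-t)/(m-1) = (m-2+t)/(m-1) := by field_simp; ring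
  have e6 : Real.log ((m-2+t)/(m-1)) = Real.log (m-2+t) - Real.log (m-1) :=
    Real.log_div hmt.ne' hm1.ne'
  rw [e1, e2, e3, e4, e5, e6]
  have h2m : (0:ℝ) < 2*m-2 := by linarith
  field_simp [h2m.ne']
  ring

lemma comb_eq {m t : ℝ} (hm : 3 ≤ m) :
    (1/(2*m-2)) * ((m-1)^2*t) + ((m-3)/(2*m-2)) * ((m-1)*(1-t))
      + (m/(2*m-2)) * ((m-1)^2/m) = m - 2 + t := by
  have hm1 : (0:ℝ) < m - 1 := by linarith
  have hm0 : (0:ℝ) < m := by linarith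
  have h2m : (0:ℝ) < 2*m-2 := by linarith
  field_simp
  ring

/-- The single-variable inequality `(*)` at log level, non-strict. -/
lemma star_le {m t : ℝ} (hm : 3 ≤ m) (ht0 : 0 < t) (ht1 : t < 1) :
    (Real.log t - 2*Real.log (1-t))
      + (m-1) * (Real.log ((1-t)/(m-1)) - 2*Real.log (1 - (1-t)/(m-1)))
      ≤ m * Real.log m - 2*m*Real.log (m-1) := by
  have hm1 : (0:ℝ) < m - 1 := by linarith
  have hm0 : (0:ℝ) < m := by linarith
  have h1t : (0:ℝ) < 1 - t := by linarith
  have h2m : (0:ℝ) < 2*m-2 := by linarith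
  have hj := log_amgm3_le (w₁ := 1/(2*m-2)) (w₂ := (m-3)/(2*m-2)) (w₃ := m/(2*m-2))
    (a₁ := (m-1)^2*t) (a₂ := (m-1)*(1-t)) (a₃ := (m-1)^2/m)
    (by positivity) (div_nonneg (by linarith) (by linarith)) (by positivity)
    (by field_simp; ring) (by positivity) (by positivity) (by positivity)
  rw [comb_eq hm] at hj
  have := key_identity hm ht0 ht1
  nlinarith [mul_le_mul_of_nonneg_left (sub_nonpos.mpr hj) h2m.le]

/-- The single-variable inequality `(*)` at log level, strict when `t ≠ 1/m`. -/
lemma star_lt {m t : ℝ} (hm : 3 ≤ m) (ht0 : 0 < t) (ht1 : t < 1) (hne : t ≠ 1/m) :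
    (Real.log t - 2*Real.log (1-t))
      + (m-1) * (Real.log ((1-t)/(m-1)) - 2*Real.log (1 - (1-t)/(m-1)))
      < m * Real.log m - 2*m*Real.log (m-1) := by
  have hm1 : (0:ℝ) < m - 1 := by linarith
  have hm0 : (0:ℝ) < m := by linarith
  have h1t : (0:ℝ) < 1 - t := by linarith
  have h2m : (0:ℝ) < 2*m-2 := by linarith
  have hane : (m-1)^2*t ≠ (m-1)^2/m := by
    intro h
    apply hne
    have h2 : (m-1)^2 * t = (m-1)^2 * (1/m) := by rw [h]; ring
    exact mul_left_cancel₀ (pow_ne_zero 2 hm1.ne') h2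
  have hj := log_amgm3_lt (w₁ := 1/(2*m-2)) (w₂ := (m-3)/(2*m-2)) (w₃ := m/(2*m-2))
    (a₁ := (m-1)^2*t) (a₂ := (m-1)*(1-t)) (a₃ := (m-1)^2/m)
    (by positivity) (div_nonneg (by linarith) (by linarith)) (by positivity)
    (by field_simp; ring) (by positivity) (by positivity) (by positivity) hane
  rw [comb_eq hm] at hj
  have := key_identity hm ht0 ht1
  nlinarith [mul_lt_mul_of_pos_left (sub_neg.mpr hj) h2m]
noncomputable def rho (x : ℝ) : ℝ := Real.log x - 2*Real.log (1-x)

lemma rho_hasDerivAt {x : ℝ} (hx0 : x ≠ 0) (hx1 : x ≠ 1) :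
    HasDerivAt rho (x⁻¹ + 2*(1-x)⁻¹) x := by
  have h1 : HasDerivAt (fun y : ℝ => 1 - y) (-1) x := by
    simpa using (hasDerivAt_id x).const_sub 1
  have h2 : HasDerivAt (fun y : ℝ => Real.log (1-y)) ((1-x)⁻¹ * (-1)) x :=
    (Real.hasDerivAt_log (by intro h; apply hx1; linarith)).comp x h1
  have := (Real.hasDerivAt_log hx0).sub ((h2.const_mul 2))
  exact this.congr_deriv (by ring)

lemma rho_deriv {x : ℝ} (hx0 : x ≠ 0) (hx1 : x ≠ 1) :
    deriv rho x = x⁻¹ + 2*(1-x)⁻¹ := (rho_hasDerivAt hx0 hx1).deriv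

lemma rho_strictConcave : StrictConcaveOn ℝ (Set.Ioc 0 (Real.sqrt 2 - 1))
    (fun x : ℝ => Real.log x - 2*Real.log (1-x)) := by
  have hs2 : (1:ℝ) < Real.sqrt 2 := by
    nlinarith [Real.sq_sqrt (by norm_num : (2:ℝ) ≥ 0), Real.sqrt_nonneg 2]
  have hr1 : Real.sqrt 2 - 1 < 1 := by
    nlinarith [Real.sq_sqrt (by norm_num : (2:ℝ) ≥ 0), Real.sqrt_nonneg 2]
  apply strictConcaveOn_of_deriv2_neg (convex_Ioc _ _)
  · apply ContinuousOn.sub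
    · exact Real.continuousOn_log.comp continuousOn_id
        (fun x hx => by exact hx.1.ne')
    · apply ContinuousOn.mul continuousOn_const
      apply Real.continuousOn_log.comp (by fun_prop)
      intro x hx
      have : x < 1 := lt_of_le_of_lt hx.2 hr1
      simp only [Set.mem_compl_iff, Set.mem_singleton_iff]
      intro h; linarith [this]
  · intro x hx
    rw [interior_Ioc] at hx
    obtain ⟨hx0, hxr⟩ := hx
    have hx1 : x < 1 := hxr.trans hr1
    -- rewrite deriv^[2]
    have hev : deriv (fun x : ℝ => Real.log x - 2*Real.log (1-x)) =ᶠ[nhds x]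
        (fun y => y⁻¹ + 2*(1-y)⁻¹) := by
      filter_upwards [IsOpen.mem_nhds isOpen_Ioo (⟨hx0, hx1⟩ : x ∈ Set.Ioo (0:ℝ) 1)]
        with y hy
      exact rho_deriv (ne_of_gt hy.1) (ne_of_lt hy.2)
    have hD2 : deriv^[2] (fun x : ℝ => Real.log x - 2*Real.log (1-x)) x
        = deriv (fun y : ℝ => y⁻¹ + 2*(1-y)⁻¹) x := by
      simp only [Function.iterate_succ, Function.iterate_zero, Function.comp_apply, id_eq]
      exact Filter.EventuallyEq.deriv_eq hev
    rw [hD2]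
    have hd : HasDerivAt (fun y : ℝ => y⁻¹ + 2*(1-y)⁻¹) (-(x^2)⁻¹ + 2*((1-x)^2)⁻¹ * 1) x := by
      have h1 : HasDerivAt (fun y : ℝ => y⁻¹) (-(x^2)⁻¹) x := by
        simpa using (hasDerivAt_inv (ne_of_gt hx0))
      have h0 : (1:ℝ) - x ≠ 0 := by intro h; linarith
      have h2 : HasDerivAt (fun y : ℝ => (1-y)⁻¹) (-((1-x)^2)⁻¹ * (-1)) x := by
        exact (hasDerivAt_inv h0).comp x (by simpa using (hasDerivAt_id x).const_sub 1)
      have := h1.add ((h2.const_mul 2))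
      exact this.congr_deriv (by ring)
    rw [hd.deriv]
    -- show `-(x^2)⁻¹ + 2*((1-x)^2)⁻¹ * 1 < 0`
    have hx1' : (0:ℝ) < 1 - x := by linarith
    rw [show -(x^2)⁻¹ + 2*((1-x)^2)⁻¹ * 1 = 2/(1-x)^2 - 1/x^2 by ring]
    rw [sub_neg, div_lt_div_iff₀ (by positivity) (by positivity)]
    nlinarith [Real.sq_sqrt (by norm_num : (2:ℝ) ≥ 0), Real.sqrt_nonneg 2, sq_nonneg (x*Real.sqrt 2 - (1-x))]

lemma sqrt2_facts : 1 < Real.sqrt 2 ∧ Real.sqrt 2 < 1.5 := by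
  constructor
  · nlinarith [Real.sq_sqrt (by norm_num : (2:ℝ) ≥ 0), Real.sqrt_nonneg 2]
  · nlinarith [Real.sq_sqrt (by norm_num : (2:ℝ) ≥ 0), Real.sqrt_nonneg 2]

/-- Case II swap: if `r < b ≤ a` and `a + b < 1` then replacing `(a,b)` by `(a+b-r, r)`
strictly increases `rho a + rho b`. -/
lemma rho_swap {a b : ℝ} (hb : Real.sqrt 2 - 1 < b) (hba : b ≤ a) (hab1 : a + b < 1) :
    rho a + rho b < rho (a + b - (Real.sqrt 2 - 1)) + rho (Real.sqrt 2 - 1) := by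
  obtain ⟨hs1, hs2⟩ := sqrt2_facts
  set r : ℝ := Real.sqrt 2 - 1 with hr
  have hr0 : 0 < r := by simp [hr]; linarith
  have hσ2r : 2*r < a + b := by linarith
  have h1σ : 0 < 1 - (a+b) := by linarith
  set σ := a + b with hσ
  set p' := r * (σ - r) with hp'
  set p := a * b with hp
  have hrr : r^2 = 1 - 2*r := by
    have : Real.sqrt 2 ^ 2 = 2 := Real.sq_sqrt (by norm_num)
    simp only [hr]; nlinarith
  have hp'gt : 1 - σ < p' := by nlinarith
  have hplt : p' < p := by nlinarith [mul_pos (show 0 < a - r by linarith) (show 0 < b - r by linarith)]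
  have hp'0 : 0 < p' := by nlinarith
  -- the function q ↦ log q - 2 log (1-σ+q) is strictly decreasing on [p', p]
  have hanti : StrictAntiOn (fun q : ℝ => Real.log q - 2*Real.log (1-σ+q)) (Set.Icc p' p) := by
    apply strictAntiOn_of_deriv_neg (convex_Icc _ _)
    · apply ContinuousOn.sub
      · exact Real.continuousOn_log.mono (fun q hq => by
          simp only [Set.mem_compl_iff, Set.mem_singleton_iff]
          intro h; rw [h] at hq; exact absurd hq.1 (by linarith))
      · apply ContinuousOn.mul continuousOn_const
        apply Real.continuousOn_log.comp (by fun_prop)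
        intro q hq
        simp only [Set.mem_compl_iff, Set.mem_singleton_iff]
        intro h
        have := hq.1
        nlinarith
    · intro q hq
      rw [interior_Icc] at hq
      obtain ⟨hq1, hq2⟩ := hq
      have hq0 : 0 < q := lt_trans hp'0 hq1
      have h1q : 0 < 1 - σ + q := by linarith
      have hd : HasDerivAt (fun q : ℝ => Real.log q - 2*Real.log (1-σ+q))
          (q⁻¹ - 2*((1-σ+q)⁻¹*1)) q := by
        have h2 : HasDerivAt (fun y : ℝ => Real.log (1-σ+y)) ((1-σ+q)⁻¹ * 1) q :=
          (Real.hasDerivAt_log h1q.ne').comp q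
            (by simpa using (hasDerivAt_id q).const_add (1-σ))
        exact (Real.hasDerivAt_log hq0.ne').sub (h2.const_mul 2)
      rw [hd.deriv]
      rw [show q⁻¹ - 2*((1-σ+q)⁻¹*1) = 1/q - 2/(1-σ+q) by ring]
      rw [sub_neg, div_lt_div_iff₀ hq0 h1q]
      nlinarith
  have hkey := hanti (Set.left_mem_Icc.mpr hplt.le) (Set.right_mem_Icc.mpr hplt.le) hplt
  simp only at hkey
  -- rewrite both sides
  have ha0 : 0 < a := by linarith
  have hb0 : 0 < b := by linarith
  have ha1 : a < 1 := by linarith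
  have hb1 : b < 1 := by linarith
  have hσr0 : 0 < σ - r := by linarith
  have hσr1 : σ - r < 1 := by linarith
  have e1 : rho a + rho b = Real.log p - 2*Real.log (1-σ+p) := by
    simp only [rho]
    rw [show (1:ℝ)-σ+p = (1-a)*(1-b) by simp [hσ, hp]; ring,
      Real.log_mul ha0.ne' hb0.ne', Real.log_mul (by linarith) (by linarith)]
    ring
  have e2 : rho (σ - r) + rho r = Real.log p' - 2*Real.log (1-σ+p') := by
    simp only [rho]
    rw [show (1:ℝ)-σ+p' = (1-(σ-r))*(1-r) by simp [hp']; ring, hp',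
      Real.log_mul hr0.ne' hσr0.ne',
      Real.log_mul (show (1:ℝ)-(σ-r) ≠ 0 by intro h; nlinarith) (show (1:ℝ)-r ≠ 0 by intro h; nlinarith)]
    ring
  rw [e1, e2]
  exact hkey
lemma caseI {n : ℕ} (hn : 3 ≤ n) (lam : Fin n → ℝ) (hpos : ∀ i, 0 < lam i)
    (hsum : ∑ i, lam i = 1) (i₀ : Fin n)
    (hsmall : ∀ j, j ≠ i₀ → lam j ≤ Real.sqrt 2 - 1) :
    (∑ i, rho (lam i) ≤ (n:ℝ) * Real.log n - 2*(n:ℝ)*Real.log ((n:ℝ)-1)) ∧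
    (∑ i, rho (lam i) = (n:ℝ) * Real.log n - 2*(n:ℝ)*Real.log ((n:ℝ)-1)
      → ∀ i, lam i = ((n:ℝ))⁻¹) := by
  have hm : (3:ℝ) ≤ (n:ℝ) := by exact_mod_cast hn
  have hm1 : (0:ℝ) < (n:ℝ) - 1 := by linarith
  set t := lam i₀ with htdef
  set s : Finset (Fin n) := univ.erase i₀ with hsdef
  have hcard : (s.card : ℝ) = (n:ℝ) - 1 := by
    rw [hsdef, card_erase_of_mem (mem_univ _), card_univ, Fintype.card_fin]
    push_cast [Nat.cast_sub (by omega : 1 ≤ n)]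
    ring
  have hsum_s : ∑ j ∈ s, lam j = 1 - t := by
    rw [hsdef, Finset.sum_erase_eq_sub (mem_univ i₀), hsum]
  have ht0 : 0 < t := hpos i₀
  have hsne : s.Nonempty := by
    rw [← Finset.card_pos]
    have : s.card = n - 1 := by
      rw [hsdef, card_erase_of_mem (mem_univ _), card_univ, Fintype.card_fin]
    omega
  have ht1 : t < 1 := by
    obtain ⟨j, hj⟩ := hsne
    have hjpos := hpos j
    have : lam j ≤ 1 - t := by
      rw [← hsum_s]
      exact Finset.single_le_sum (fun i _ => (hpos i).le) hj
    linarith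
  set u : ℝ := (1 - t)/((n:ℝ)-1) with hu
  -- Jensen
  have hw : ∀ j ∈ s, (0:ℝ) < ((n:ℝ)-1)⁻¹ := fun j _ => by positivity
  have hw1 : ∑ j ∈ s, ((n:ℝ)-1)⁻¹ = 1 := by
    rw [Finset.sum_const, nsmul_eq_mul, hcard]
    field_simp
  have hmem : ∀ j ∈ s, lam j ∈ Set.Ioc 0 (Real.sqrt 2 - 1) := by
    intro j hj
    exact ⟨hpos j, hsmall j (by rw [hsdef] at hj; exact (Finset.mem_erase.mp hj).1)⟩
  have hcenter : ∑ j ∈ s, ((n:ℝ)-1)⁻¹ • lam j = u := by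
    simp only [smul_eq_mul]
    rw [← Finset.mul_sum, hsum_s, hu]
    field_simp
  have hJ : ∑ j ∈ s, ((n:ℝ)-1)⁻¹ • rho (lam j) ≤ rho u := by
    have := rho_strictConcave.concaveOn.le_map_sum (fun j hj => (hw j hj).le) hw1 hmem
    rw [hcenter] at this
    exact this
  have hJ' : ∑ j ∈ s, rho (lam j) ≤ ((n:ℝ)-1) * rho u := by
    have h2 : ((n:ℝ)-1) * (∑ j ∈ s, ((n:ℝ)-1)⁻¹ • rho (lam j)) ≤ ((n:ℝ)-1) * rho u :=
      mul_le_mul_of_nonneg_left hJ hm1.le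
    calc ∑ j ∈ s, rho (lam j) = ((n:ℝ)-1) * ∑ j ∈ s, ((n:ℝ)-1)⁻¹ • rho (lam j) := by
          simp only [smul_eq_mul]
          rw [← Finset.mul_sum, ← mul_assoc, mul_inv_cancel₀ hm1.ne', one_mul]
      _ ≤ _ := h2
  have hstar : rho t + ((n:ℝ)-1) * rho u ≤ (n:ℝ) * Real.log n - 2*(n:ℝ)*Real.log ((n:ℝ)-1) := by
    have := star_le hm ht0 ht1
    simpa [rho, hu] using this
  have hdecomp : ∑ i, rho (lam i) = rho t + ∑ j ∈ s, rho (lam j) := by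
    rw [hsdef, Finset.sum_erase_eq_sub (mem_univ i₀)]
    ring
  constructor
  · rw [hdecomp]; linarith
  · intro heq
    -- first, equality forces `t = 1/n`
    have ht_eq : t = 1/(n:ℝ) := by
      by_contra hne
      have := star_lt hm ht0 ht1 hne
      have hstar' : rho t + ((n:ℝ)-1) * rho u < (n:ℝ) * Real.log n - 2*(n:ℝ)*Real.log ((n:ℝ)-1) := by
        simpa [rho, hu] using this
      rw [hdecomp] at heq
      linarith
    -- and equality in Jensen
    have hJeq : rho u ≤ ∑ j ∈ s, ((n:ℝ)-1)⁻¹ • rho (lam j) := by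
      rw [hdecomp] at heq
      by_contra hlt
      push_neg at hlt
      have : ∑ j ∈ s, rho (lam j) < ((n:ℝ)-1) * rho u := by
        calc ∑ j ∈ s, rho (lam j) = ((n:ℝ)-1) * ∑ j ∈ s, ((n:ℝ)-1)⁻¹ • rho (lam j) := by
              simp only [smul_eq_mul]
              rw [← Finset.mul_sum, ← mul_assoc, mul_inv_cancel₀ hm1.ne', one_mul]
          _ < ((n:ℝ)-1) * rho u := by exact (mul_lt_mul_iff_right₀ hm1).mpr hlt
      linarith
    have hall : ∀ j ∈ s, ∀ k ∈ s, lam j = lam k := by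
      have := rho_strictConcave.eq_of_map_sum_eq hw hw1 hmem ?_
      · intro j hj k hk; exact this hj hk
      · rw [hcenter]
        simpa [rho] using hJeq
    -- conclude
    obtain ⟨j₀, hj₀⟩ := hsne
    have hlamj₀ : lam j₀ = ((n:ℝ))⁻¹ := by
      have hs_sum : ∑ j ∈ s, lam j = s.card • lam j₀ := by
        rw [Finset.sum_congr rfl (fun k hk => hall k hk j₀ hj₀)]
        simp [Finset.sum_const]
      rw [hsum_s, ht_eq] at hs_sum
      have : 1 - 1/(n:ℝ) = ((n:ℝ)-1) * lam j₀ := by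
        rw [hs_sum, nsmul_eq_mul, hcard]
      have hn0 : (0:ℝ) < n := by linarith
      field_simp at this
      -- this : n - 1 = (n-1) * lam j₀ * n or similar; solve
      have h2 : ((n:ℝ)-1) * (lam j₀ * (n:ℝ)) = ((n:ℝ)-1) * 1 := by nlinarith [this]
      have h3 := mul_left_cancel₀ hm1.ne' h2
      field_simp
      linarith [h3]
    intro i
    by_cases hi : i = i₀
    · rw [hi, ← htdef, ht_eq]; norm_num
    · have : i ∈ s := by rw [hsdef]; exact Finset.mem_erase.mpr ⟨hi, mem_univ _⟩
      rw [hall i this j₀ hj₀, hlamj₀]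
lemma sum_split {n : ℕ} (f : Fin n → ℝ) {j k : Fin n} (hjk : j ≠ k) :
    ∑ i, f i = f j + f k + ∑ i ∈ univ \ {j,k}, f i := by
  have h1 : ∑ i ∈ ({j,k} : Finset (Fin n)), f i = f j + f k := Finset.sum_pair hjk
  rw [← Finset.sum_sdiff (Finset.subset_univ ({j,k} : Finset (Fin n))), h1]
  ring

lemma caseII {n : ℕ} (hn : 3 ≤ n) (lam : Fin n → ℝ) (hpos : ∀ i, 0 < lam i)
    (hsum : ∑ i, lam i = 1) {j k : Fin n} (hjk : j ≠ k)
    (hkr : Real.sqrt 2 - 1 < lam k) (hkj : lam k ≤ lam j) :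
    ∑ i, rho (lam i) < (n:ℝ) * Real.log n - 2*(n:ℝ)*Real.log ((n:ℝ)-1) := by
  obtain ⟨hs1, hs2⟩ := sqrt2_facts
  set r : ℝ := Real.sqrt 2 - 1 with hr
  have hr0 : 0 < r := by rw [hr]; linarith
  have hrr : r^2 = 1 - 2*r := by
    have : Real.sqrt 2 ^ 2 = 2 := Real.sq_sqrt (by norm_num)
    rw [hr]; nlinarith
  have hr1 : r < 1 := by rw [hr]; linarith
  -- third-index facts
  have hcard : (univ \ ({j,k} : Finset (Fin n))).Nonempty := by
    rw [← Finset.card_pos, Finset.card_sdiff_of_subset (Finset.subset_univ _), Finset.card_pair hjk,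
      card_univ, Fintype.card_fin]
    omega
  have hsd : ∑ i ∈ univ \ ({j,k} : Finset (Fin n)), lam i = 1 - (lam j + lam k) := by
    have := sum_split lam hjk
    rw [hsum] at this
    linarith
  have hσ1 : lam j + lam k < 1 := by
    have hpos' : 0 < ∑ i ∈ univ \ ({j,k} : Finset (Fin n)), lam i :=
      Finset.sum_pos (fun i _ => hpos i) hcard
    linarith [hsd ▸ hpos']
  set σ := lam j + lam k with hσ
  set lam' : Fin n → ℝ := fun i => if i = j then σ - r else if i = k then r else lam i with hlam'
  have hl'j : lam' j = σ - r := by simp [hlam']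
  have hl'k : lam' k = r := by simp [hlam', Ne.symm hjk]
  have hl'other : ∀ i ∈ univ \ ({j,k} : Finset (Fin n)), lam' i = lam i := by
    intro i hi
    simp only [Finset.mem_sdiff, Finset.mem_insert, Finset.mem_singleton, mem_univ,
      true_and, not_or] at hi
    simp [hlam', hi.1, hi.2]
  have hσr : r < σ - r := by
    have := hpos j
    nlinarith [hkr, hkj]
  have hpos' : ∀ i, 0 < lam' i := by
    intro i
    rw [hlam']
    by_cases h1 : i = j
    · simp [h1]; linarith
    · by_cases h2 : i = k
      · simp [h1, h2, Ne.symm hjk]; linarith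
      · simp [h1, h2]; exact hpos i
  have hsum' : ∑ i, lam' i = 1 := by
    rw [sum_split lam' hjk, hl'j, hl'k, Finset.sum_congr rfl hl'other, hsd]
    ring
  have hsmall' : ∀ i, i ≠ j → lam' i ≤ r := by
    intro i hij
    by_cases h2 : i = k
    · rw [h2, hl'k]
    · have hi : i ∈ univ \ ({j,k} : Finset (Fin n)) := by
        simp [Finset.mem_sdiff, hij, h2]
      rw [hl'other i hi]
      have : lam i ≤ 1 - σ := by
        rw [← hsd]
        exact Finset.single_le_sum (fun i _ => (hpos i).le) hi
      nlinarith
  have hle := (caseI hn lam' hpos' hsum' j hsmall').1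
  have hswap : rho (lam j) + rho (lam k) < rho (σ - r) + rho r :=
    rho_swap hkr hkj hσ1
  calc ∑ i, rho (lam i)
      = rho (lam j) + rho (lam k) + ∑ i ∈ univ \ ({j,k} : Finset (Fin n)), rho (lam i) :=
        sum_split (fun i => rho (lam i)) hjk
    _ < rho (σ - r) + rho r + ∑ i ∈ univ \ ({j,k} : Finset (Fin n)), rho (lam i) := by linarith
    _ = ∑ i, rho (lam' i) := by
        rw [sum_split (fun i => rho (lam' i)) hjk, hl'j, hl'k]
        have : ∑ i ∈ univ \ ({j,k} : Finset (Fin n)), rho (lam' i)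
            = ∑ i ∈ univ \ ({j,k} : Finset (Fin n)), rho (lam i) :=
          Finset.sum_congr rfl (fun i hi => by rw [hl'other i hi])
        rw [this]
    _ ≤ _ := hle

lemma core_log {n : ℕ} (hn : 3 ≤ n) (lam : Fin n → ℝ) (hpos : ∀ i, 0 < lam i)
    (hsum : ∑ i, lam i = 1) :
    (∑ i, rho (lam i) ≤ (n:ℝ) * Real.log n - 2*(n:ℝ)*Real.log ((n:ℝ)-1)) ∧
    (∑ i, rho (lam i) = (n:ℝ) * Real.log n - 2*(n:ℝ)*Real.log ((n:ℝ)-1)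
      → ∀ i, lam i = ((n:ℝ))⁻¹) := by
  by_cases hc : ∃ i₀, ∀ i, i ≠ i₀ → lam i ≤ Real.sqrt 2 - 1
  · obtain ⟨i₀, h⟩ := hc
    exact caseI hn lam hpos hsum i₀ h
  · push_neg at hc
    have hne : (0:ℕ) < n := by omega
    obtain ⟨j, hji, hj⟩ := hc ⟨0, hne⟩
    obtain ⟨k, hkj, hk⟩ := hc j
    have hlt : ∑ i, rho (lam i) < (n:ℝ) * Real.log n - 2*(n:ℝ)*Real.log ((n:ℝ)-1) := by
      rcases le_total (lam k) (lam j) with h | h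
      · exact caseII hn lam hpos hsum (Ne.symm hkj) hk h
      · exact caseII hn lam hpos hsum hkj hj h
    exact ⟨hlt.le, fun h => absurd h hlt.ne⟩

lemma core_prod {n : ℕ} (hn : 3 ≤ n) (lam : Fin n → ℝ) (hpos : ∀ i, 0 < lam i)
    (hlt1 : ∀ i, lam i < 1) (hsum : ∑ i, lam i = 1) :
    (∏ i, lam i / (1 - lam i)^2 ≤ (n:ℝ)^n / ((n:ℝ)-1)^(2*n)) ∧
    (∏ i, lam i / (1 - lam i)^2 = (n:ℝ)^n / ((n:ℝ)-1)^(2*n) → ∀ i, lam i = ((n:ℝ))⁻¹) := by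
  have hm : (3:ℝ) ≤ (n:ℝ) := by exact_mod_cast hn
  have hm1 : (0:ℝ) < (n:ℝ) - 1 := by linarith
  have hm0 : (0:ℝ) < (n:ℝ) := by linarith
  have hP : ∏ i, lam i / (1 - lam i)^2 = Real.exp (∑ i, rho (lam i)) := by
    rw [Real.exp_sum]
    apply Finset.prod_congr rfl
    intro i _
    have h1 : (0:ℝ) < 1 - lam i := by linarith [hlt1 i]
    rw [rho, show (2:ℝ)*Real.log (1-lam i) = Real.log ((1-lam i)^2) by
        rw [Real.log_pow]; push_cast; ring,
      Real.exp_sub, Real.exp_log (hpos i), Real.exp_log (by positivity)]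
  have hC : (n:ℝ)^n/((n:ℝ)-1)^(2*n)
      = Real.exp ((n:ℝ)*Real.log n - 2*(n:ℝ)*Real.log ((n:ℝ)-1)) := by
    rw [show (n:ℝ)*Real.log n = Real.log ((n:ℝ)^n) by rw [Real.log_pow],
      show 2*(n:ℝ)*Real.log ((n:ℝ)-1) = Real.log (((n:ℝ)-1)^(2*n)) by
        rw [Real.log_pow]; push_cast; ring,
      Real.exp_sub, Real.exp_log (by positivity), Real.exp_log (by positivity)]
  obtain ⟨hle, heq⟩ := core_log hn lam hpos hsum
  constructor
  · rw [hP, hC]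
    exact Real.exp_le_exp.mpr hle
  · intro h
    rw [hP, hC] at h
    exact heq (Real.exp_injective h)

lemma lt_one_of_sum_eq_one {n : ℕ} (hn : 2 ≤ n) (lam : Fin n → ℝ) (hpos : ∀ i, 0 < lam i)
    (hsum : ∑ i, lam i = 1) (i : Fin n) : lam i < 1 := by
  have hne : (univ.erase i).Nonempty := by
    rw [← Finset.card_pos, card_erase_of_mem (mem_univ _), card_univ, Fintype.card_fin]
    omega
  obtain ⟨j, hj⟩ := hne
  have h1 : lam j ≤ ∑ k ∈ univ.erase i, lam k :=
    Finset.single_le_sum (fun k _ => (hpos k).le) hj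
  have h2 : ∑ k ∈ univ.erase i, lam k = 1 - lam i := by
    rw [Finset.sum_erase_eq_sub (mem_univ i), hsum]
  linarith [hpos j]

lemma posdef_conj {n : ℕ} {M : Matrix (Fin n) (Fin n) ℝ} (hM : M.PosDef)
    (B : Matrix (Fin n) (Fin n) ℝ) (hB : ∀ x, B *ᵥ x = 0 → x = 0) :
    (star B * M * B).PosDef := by
  rw [Matrix.star_eq_conjTranspose]
  rw [Matrix.posDef_iff_dotProduct_mulVec] at hM ⊢
  refine ⟨Matrix.isHermitian_conjTranspose_mul_mul B hM.1, fun x hx => ?_⟩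
  have hx' : B *ᵥ x ≠ 0 := fun h => hx (hB x h)
  simpa only [Matrix.star_mulVec, Matrix.dotProduct_mulVec, Matrix.vecMul_vecMul]
    using hM.2 hx'


/-- The Besson–Courtois–Gallot linear-algebra lemma: for `n ≥ 3` and a real symmetric
positive definite `n×n` matrix `H` with `tr H = 1`, the matrix `K = I − H` is also
positive definite, `√(det H)/det K ≤ (√n/(n−1))ⁿ`, and equality holds if and only if
`H = (1/n)·I`, in which case `K = ((n−1)/n)·I`. -/
theorem bcg_linear_algebra_lemma {n : ℕ} (hn : 3 ≤ n)
    (H : Matrix (Fin n) (Fin n) ℝ) (hH : H.PosDef) (htr : H.trace = 1) :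
    (1 - H).PosDef ∧
    Real.sqrt H.det / (1 - H).det ≤ Real.sqrt n ^ n / ((n : ℝ) - 1) ^ n ∧
    (Real.sqrt H.det / (1 - H).det = Real.sqrt n ^ n / ((n : ℝ) - 1) ^ n ↔
      H = (n : ℝ)⁻¹ • 1) ∧
    (H = (n : ℝ)⁻¹ • 1 → (1 : Matrix (Fin n) (Fin n) ℝ) - H = (((n : ℝ) - 1) / n) • 1) := by
  have hm : (3:ℝ) ≤ (n:ℝ) := by exact_mod_cast hn
  have hm1 : (0:ℝ) < (n:ℝ) - 1 := by linarith
  have hm0 : (0:ℝ) < (n:ℝ) := by linarith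
  have hH1 : H.IsHermitian := hH.1
  set lam : Fin n → ℝ := hH1.eigenvalues with hlam
  set U : Matrix (Fin n) (Fin n) ℝ := (hH1.eigenvectorUnitary : Matrix (Fin n) (Fin n) ℝ)
    with hU
  have hUU : U * star U = 1 := Matrix.mem_unitaryGroup_iff.mp hH1.eigenvectorUnitary.2
  have hU'U : star U * U = 1 := Matrix.mem_unitaryGroup_iff'.mp hH1.eigenvectorUnitary.2
  have hspec : H = U * Matrix.diagonal lam * star U := by
    have := hH1.spectral_theorem
    rwa [RCLike.ofReal_real_eq_id, Function.id_comp] at this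
  have hpos : ∀ i, 0 < lam i := hH.eigenvalues_pos
  have hsum : ∑ i, lam i = 1 := by
    have h1 : H.trace = (U * Matrix.diagonal lam * star U).trace := by rw [← hspec]
    rw [Matrix.trace_mul_comm (U * Matrix.diagonal lam) (star U), ← mul_assoc, hU'U,
      one_mul, Matrix.trace_diagonal] at h1
    rw [← h1, htr]
  have hlt1 : ∀ i, lam i < 1 := lt_one_of_sum_eq_one (by omega) lam hpos hsum
  have hdetH : H.det = ∏ i, lam i := by
    simpa using hH1.det_eq_prod_eigenvalues
  have h1H : (1 : Matrix (Fin n) (Fin n) ℝ) - H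
      = U * Matrix.diagonal (fun i => 1 - lam i) * star U := by
    have h1 : (1 : Matrix (Fin n) (Fin n) ℝ) = U * 1 * star U := by rw [mul_one, hUU]
    calc (1 : Matrix (Fin n) (Fin n) ℝ) - H
        = U * 1 * star U - U * Matrix.diagonal lam * star U := by rw [← h1, ← hspec]
      _ = U * (1 - Matrix.diagonal lam) * star U := by
          rw [Matrix.mul_sub, Matrix.sub_mul]
      _ = U * Matrix.diagonal (fun i => 1 - lam i) * star U := by
          rw [← Matrix.diagonal_one, Matrix.diagonal_sub]
  have hdet1H : (1 - H).det = ∏ i, (1 - lam i) := by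
    rw [h1H, Matrix.det_mul, Matrix.det_mul, Matrix.det_diagonal]
    have hd : U.det * (star U).det = 1 := by rw [← Matrix.det_mul, hUU, Matrix.det_one]
    calc U.det * (∏ i, (1 - lam i)) * (star U).det
        = (U.det * (star U).det) * ∏ i, (1 - lam i) := by ring
      _ = ∏ i, (1 - lam i) := by rw [hd, one_mul]
  -- positivity facts
  have hA0 : 0 < H.det := by rw [hdetH]; exact Finset.prod_pos (fun i _ => hpos i)
  have hB0 : 0 < (1 - H).det := by
    rw [hdet1H]; exact Finset.prod_pos (fun i _ => by linarith [hlt1 i])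
  have hT0 : 0 < Real.sqrt n ^ n / ((n : ℝ) - 1) ^ n := by
    apply div_pos (pow_pos (Real.sqrt_pos.mpr hm0) n) (pow_pos hm1 n)
  -- first conjunct : (1-H).PosDef
  have hPD : (1 - H).PosDef := by
    rw [h1H, show U = star (star U) by rw [star_star]]
    apply posdef_conj (Matrix.PosDef.diagonal (fun i => by linarith [hlt1 i] : ∀ i, 0 < 1 - lam i))
    intro x hx
    have : (U * star U) *ᵥ x = U *ᵥ (star U *ᵥ x) := by rw [Matrix.mulVec_mulVec]
    rw [hUU, Matrix.one_mulVec, hx, Matrix.mulVec_zero] at this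
    exact this
  -- squared target
  have hT2 : (Real.sqrt n ^ n / ((n : ℝ) - 1) ^ n)^2 = (n:ℝ)^n / ((n:ℝ)-1)^(2*n) := by
    rw [div_pow]
    congr 1
    · calc (Real.sqrt n ^ n)^2 = (Real.sqrt n ^ 2)^n := by ring
        _ = (n:ℝ)^n := by rw [Real.sq_sqrt hm0.le]
    · ring
  -- product identity
  have hprod : ∏ i, lam i / (1 - lam i)^2 = H.det / ((1 - H).det)^2 := by
    rw [hdetH, hdet1H, ← Finset.prod_pow, ← Finset.prod_div_distrib]
  obtain ⟨hcle, hceq⟩ := core_prod hn lam hpos hlt1 hsum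
  rw [hprod] at hcle hceq
  -- inequality
  have hineq : Real.sqrt H.det / (1 - H).det ≤ Real.sqrt n ^ n / ((n : ℝ) - 1) ^ n := by
    rw [div_le_iff₀ hB0]
    have h1 : H.det ≤ ((Real.sqrt n ^ n / ((n : ℝ) - 1) ^ n) * (1 - H).det)^2 := by
      rw [mul_pow, hT2]
      have h2 := (div_le_iff₀ (by positivity : (0:ℝ) < ((1 - H).det)^2)).mp hcle
      linarith
    calc Real.sqrt H.det ≤ Real.sqrt (((Real.sqrt n ^ n / ((n : ℝ) - 1) ^ n) * (1 - H).det)^2) :=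
          Real.sqrt_le_sqrt h1
      _ = (Real.sqrt n ^ n / ((n : ℝ) - 1) ^ n) * (1 - H).det := Real.sqrt_sq (by positivity)
  refine ⟨hPD, hineq, ?_, ?_⟩
  · constructor
    · -- equality → H = n⁻¹ • 1
      intro h
      have hsq : H.det / ((1 - H).det)^2 = (n:ℝ)^n / ((n:ℝ)-1)^(2*n) := by
        have h2 : (Real.sqrt H.det / (1 - H).det)^2
            = (Real.sqrt n ^ n / ((n : ℝ) - 1) ^ n)^2 := by rw [h]
        rw [div_pow, Real.sq_sqrt hA0.le, hT2] at h2
        exact h2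
      have hall := hceq hsq
      have hdiag : Matrix.diagonal lam = ((n:ℝ)⁻¹ : ℝ) • (1 : Matrix (Fin n) (Fin n) ℝ) := by
        have : lam = fun _ => (n:ℝ)⁻¹ := funext hall
        rw [this]
        ext i j
        rcases eq_or_ne i j with rfl | hij
        · simp
        · simp [Matrix.diagonal_apply_ne _ hij, Matrix.one_apply_ne hij]
      rw [hspec, hdiag, mul_smul_comm, smul_mul_assoc, mul_one, hUU]
    · -- H = n⁻¹ • 1 → equality
      intro h
      have hdetH' : H.det = ((n:ℝ)⁻¹)^n := by
        rw [h, Matrix.det_smul, Matrix.det_one, mul_one, Fintype.card_fin]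
      have hdet1H' : (1 - H).det = (((n:ℝ)-1)/n)^n := by
        have : (1 : Matrix (Fin n) (Fin n) ℝ) - H = (((n : ℝ) - 1) / n) • 1 := by
          rw [h, show ((n:ℝ)-1)/n = 1 - (n:ℝ)⁻¹ by field_simp, sub_smul, one_smul]
        rw [this, Matrix.det_smul, Matrix.det_one, mul_one, Fintype.card_fin]
      rw [hdetH', hdet1H']
      have hss : Real.sqrt (n:ℝ) * Real.sqrt (n:ℝ) = (n:ℝ) := Real.mul_self_sqrt hm0.le
      have hsne : Real.sqrt (n:ℝ) ≠ 0 := by positivity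
      have e : ((Real.sqrt (n:ℝ))⁻¹^n)^2 = ((n:ℝ)⁻¹)^n := by
        calc ((Real.sqrt (n:ℝ))⁻¹^n)^2 = ((Real.sqrt (n:ℝ) * Real.sqrt (n:ℝ))⁻¹)^n := by
              rw [mul_inv]; ring
          _ = ((n:ℝ)⁻¹)^n := by rw [hss]
      rw [show Real.sqrt (((n:ℝ)⁻¹)^n) = (Real.sqrt (n:ℝ))⁻¹^n by
        rw [← e, Real.sqrt_sq (by positivity)]]
      rw [div_eq_div_iff (by positivity) (by positivity), ← mul_pow, ← mul_pow]
      congr 1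
      field_simp
      nlinarith [hss]
  · intro h
    rw [h, show ((n:ℝ)-1)/n = 1 - (n:ℝ)⁻¹ by field_simp, sub_smul, one_smul]
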